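/- Let σ, γ, c_∞ ≥ 0 with σ, γ > 0, let τ_γ : [0,∞) → [0,∞) be nondecreasing with τ_γ(0) = 0, and let Q_γ be the associated sticky kernel on [0,∞). Then for any w₀ ≥ 0 and q ≥ 1, ∫ |w₁ − τ_γ(w₀) − γc_∞|^q Q_γ(w₀, dw₁) ≤ (4σ²γ)^{q/2} (m_q + 2 sup_{u ≥ 0} u^q Φ(−u)), where m_q is the q-th absolute moment of the standard Gaussian distribution and Φ its CDF. -/
import Mathlib


open MeasureTheory

/-- Standard Gaussian density. -/
noncomputable def stdG (g : ℝ) : ℝ :=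
  (Real.sqrt (2 * Real.pi))⁻¹ * Real.exp (-g ^ 2 / 2)

/-- Standard Gaussian cumulative distribution function. -/
noncomputable def Phi (x : ℝ) : ℝ := ∫ u in Set.Iio x, stdG u

/-- Density of the one-dimensional centered Gaussian with variance `v`. -/
noncomputable def gpdf (v x : ℝ) : ℝ :=
  (Real.sqrt (2 * Real.pi * v))⁻¹ * Real.exp (-x ^ 2 / (2 * v))

/-- `p̄(t, g) = min(1, φ_v(t − √v g)/φ_v(√v g))` with `v = σ²γ`. -/
noncomputable def pbar (σ γ t g : ℝ) : ℝ :=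
  min 1 (gpdf (σ ^ 2 * γ) (t - σ * Real.sqrt γ * g) /
    gpdf (σ ^ 2 * γ) (σ * Real.sqrt γ * g))

/-- The `q`-th absolute moment of the standard Gaussian distribution. -/
noncomputable def gaussMoment (q : ℝ) : ℝ := ∫ g : ℝ, |g| ^ q * stdG g


lemma stdG_nonneg (g : ℝ) : 0 ≤ stdG g :=
  mul_nonneg (inv_nonneg.2 (Real.sqrt_nonneg _)) (Real.exp_pos _).le

lemma stdG_continuous : Continuous stdG := by
  unfold stdG
  fun_prop

lemma stdG_integrable : Integrable stdG := by
  have : stdG = fun g => (Real.sqrt (2 * Real.pi))⁻¹ * Real.exp (-(1/2) * g ^ 2) := by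
    funext g; unfold stdG; ring_nf
  rw [this]
  exact (integrable_exp_neg_mul_sq (by norm_num)).const_mul _

lemma stdG_integral : ∫ g : ℝ, stdG g = 1 := by
  have h1 : ∫ g : ℝ, Real.exp (-(1/2) * g ^ 2) = Real.sqrt (Real.pi / (1/2)) :=
    integral_gaussian (1/2)
  have h2 : ∫ g : ℝ, stdG g = (Real.sqrt (2 * Real.pi))⁻¹ * ∫ g : ℝ, Real.exp (-(1/2) * g ^ 2) := by
    rw [← integral_const_mul]
    congr 1; funext g; unfold stdG; ring_nf
  rw [h2, h1]
  have : Real.pi / (1/2) = 2 * Real.pi := by ring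
  rw [this]
  rw [inv_mul_cancel₀]
  positivity

lemma setIntegral_stdG_shift (a b : ℝ) :
    ∫ g in Set.Iio b, stdG (g + a) = ∫ g in Set.Iio (b + a), stdG g := by
  rw [← integral_indicator measurableSet_Iio, ← integral_indicator measurableSet_Iio]
  rw [← integral_add_right_eq_self (Set.indicator (Set.Iio (b + a)) stdG) a]
  congr 1; funext x
  by_cases h : x < b
  · rw [Set.indicator_of_mem (by simpa using h), Set.indicator_of_mem (by simp; linarith)]
  · rw [Set.indicator_of_notMem (by simpa using h),
      Set.indicator_of_notMem (by simp; push_neg at h; linarith)]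

lemma Phi_nonneg (x : ℝ) : 0 ≤ Phi x :=
  setIntegral_nonneg measurableSet_Iio fun g _ => stdG_nonneg g

lemma stdG_neg (g : ℝ) : stdG (-g) = stdG g := by unfold stdG; ring_nf

lemma setIntegral_stdG_Ici (u : ℝ) : ∫ g in Set.Ici u, stdG g = Phi (-u) := by
  unfold Phi
  rw [show (∫ g in Set.Ici u, stdG g) = ∫ g in Set.Ioi u, stdG g from
    (setIntegral_congr_set Ioi_ae_eq_Ici).symm]
  rw [← integral_indicator measurableSet_Ioi, ← integral_indicator measurableSet_Iio]
  rw [← integral_neg_eq_self (Set.indicator (Set.Ioi u) stdG)]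
  congr 1; funext x
  by_cases h : x < -u
  · rw [Set.indicator_of_mem (by simp; linarith), Set.indicator_of_mem (by simpa using h),
      stdG_neg]
  · rw [Set.indicator_of_notMem (by simp; push_neg at h; linarith),
      Set.indicator_of_notMem (by simpa using h)]

lemma Phi_le_exp (u : ℝ) (hu : 0 ≤ u) : Phi (-u) ≤ Real.exp (-u ^ 2 / 2) := by
  unfold Phi
  have key : ∫ g in Set.Iio (-u), stdG g ≤
      ∫ g in Set.Iio (-u), Real.exp (-u ^ 2 / 2) * stdG (g + u) := by
    apply integral_mono_of_nonneg
    · exact Filter.Eventually.of_forall fun g => stdG_nonneg g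
    · exact ((stdG_integrable.comp_add_right u).const_mul _).restrict
    · rw [Filter.EventuallyLE, ae_restrict_iff' measurableSet_Iio]
      refine Filter.Eventually.of_forall fun g hg => ?_
      simp only [Set.mem_Iio] at hg
      unfold stdG
      rw [← mul_assoc, mul_comm (Real.exp (-u ^ 2 / 2)), mul_assoc, ← Real.exp_add]
      apply mul_le_mul_of_nonneg_left _ (inv_nonneg.2 (Real.sqrt_nonneg _))
      apply Real.exp_le_exp.2
      nlinarith [mul_nonneg hu (neg_nonneg.2 (by linarith : g + u ≤ 0))]
  calc ∫ g in Set.Iio (-u), stdG g ≤ _ := key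
    _ = Real.exp (-u ^ 2 / 2) * ∫ g in Set.Iio (-u), stdG (g + u) := integral_const_mul _ _
    _ ≤ Real.exp (-u ^ 2 / 2) * 1 := by
        apply mul_le_mul_of_nonneg_left _ (Real.exp_pos _).le
        rw [setIntegral_stdG_shift]
        calc ∫ g in Set.Iio (-u + u), stdG g ≤ ∫ g : ℝ, stdG g :=
              setIntegral_le_integral stdG_integrable
                (Filter.Eventually.of_forall fun g => stdG_nonneg g)
          _ = 1 := stdG_integral
    _ = Real.exp (-u ^ 2 / 2) := mul_one _

lemma rpow_mul_exp_bound (q : ℝ) (hq : 0 ≤ q) (u : ℝ) (hu : 0 ≤ u) :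
    u ^ q * Real.exp (-u ^ 2 / 2) ≤ ((Nat.factorial (Nat.ceil q) : ℕ) : ℝ) * 2 ^ Nat.ceil q + 1 := by
  set n := Nat.ceil q with hn
  have hfac1 : (1 : ℝ) ≤ ((Nat.factorial n : ℕ) : ℝ) := by
    exact_mod_cast Nat.one_le_iff_ne_zero.2 (Nat.factorial_ne_zero n)
  have hfac2 : (1 : ℝ) ≤ 2 ^ n := one_le_pow₀ (by norm_num)
  rcases le_or_gt u 1 with hu1 | hu1
  · have h1 : u ^ q ≤ 1 := Real.rpow_le_one hu hu1 hq
    have h2 : Real.exp (-u ^ 2 / 2) ≤ 1 := Real.exp_le_one_iff.2 (by nlinarith)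
    nlinarith [Real.exp_pos (-u ^ 2 / 2), Real.rpow_nonneg hu q]
  · have hq2n : q ≤ ((2 * n : ℕ) : ℝ) := by
      push_cast
      nlinarith [Nat.le_ceil q, (Nat.ceil q).cast_nonneg (α := ℝ)]
    have h1 : u ^ q ≤ u ^ (2 * n : ℕ) := by
      rw [← Real.rpow_natCast u (2 * n)]
      exact Real.rpow_le_rpow_of_exponent_le hu1.le hq2n
    have hexp : (u ^ 2 / 2) ^ n / ((Nat.factorial n : ℕ) : ℝ) ≤ Real.exp (u ^ 2 / 2) := by
      refine le_trans ?_ (Real.sum_le_exp_of_nonneg (by positivity) (n + 1))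
      exact Finset.single_le_sum (f := fun i => (u ^ 2 / 2) ^ i / ((Nat.factorial i : ℕ) : ℝ))
        (fun i _ => by positivity) (Finset.self_mem_range_succ n)
    have h3 : (u ^ 2 / 2) ^ n ≤ ((Nat.factorial n : ℕ) : ℝ) * Real.exp (u ^ 2 / 2) := by
      rw [div_le_iff₀ (by positivity : (0:ℝ) < ((Nat.factorial n : ℕ) : ℝ))] at hexp
      linarith
    have h4 : u ^ (2 * n : ℕ) = 2 ^ n * (u ^ 2 / 2) ^ n := by
      rw [pow_mul, ← mul_pow]; ring_nf
    have h5 : Real.exp (-u ^ 2 / 2) * Real.exp (u ^ 2 / 2) = 1 := by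
      rw [← Real.exp_add]; ring_nf; exact Real.exp_zero
    have h6 : (u ^ 2 / 2) ^ n * Real.exp (-u ^ 2 / 2) ≤ ((Nat.factorial n : ℕ) : ℝ) := by
      calc (u ^ 2 / 2) ^ n * Real.exp (-u ^ 2 / 2)
          ≤ ((Nat.factorial n : ℕ) : ℝ) * Real.exp (u ^ 2 / 2) * Real.exp (-u ^ 2 / 2) :=
            mul_le_mul_of_nonneg_right h3 (Real.exp_pos _).le
        _ = ((Nat.factorial n : ℕ) : ℝ) * (Real.exp (-u ^ 2 / 2) * Real.exp (u ^ 2 / 2)) := by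
            ring
        _ = ((Nat.factorial n : ℕ) : ℝ) := by rw [h5, mul_one]
    have key : u ^ (2 * n : ℕ) * Real.exp (-u ^ 2 / 2) ≤ ((Nat.factorial n : ℕ) : ℝ) * 2 ^ n := by
      rw [h4]
      calc 2 ^ n * (u ^ 2 / 2) ^ n * Real.exp (-u ^ 2 / 2)
          = 2 ^ n * ((u ^ 2 / 2) ^ n * Real.exp (-u ^ 2 / 2)) := by ring
        _ ≤ 2 ^ n * ((Nat.factorial n : ℕ) : ℝ) :=
            mul_le_mul_of_nonneg_left h6 (by positivity)
        _ = ((Nat.factorial n : ℕ) : ℝ) * 2 ^ n := by ring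
    calc u ^ q * Real.exp (-u ^ 2 / 2) ≤ u ^ (2 * n : ℕ) * Real.exp (-u ^ 2 / 2) :=
          mul_le_mul_of_nonneg_right h1 (Real.exp_pos _).le
      _ ≤ ((Nat.factorial n : ℕ) : ℝ) * 2 ^ n := key
      _ ≤ ((Nat.factorial n : ℕ) : ℝ) * 2 ^ n + 1 := by linarith

lemma bddAbove_phi_image (q : ℝ) (hq : 0 ≤ q) :
    BddAbove ((fun u : ℝ => u ^ q * Phi (-u)) '' Set.Ici 0) := by
  refine ⟨((Nat.factorial (Nat.ceil q) : ℕ) : ℝ) * 2 ^ Nat.ceil q + 1, ?_⟩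
  rintro y ⟨u, hu, rfl⟩
  simp only [Set.mem_Ici] at hu
  calc u ^ q * Phi (-u) ≤ u ^ q * Real.exp (-u ^ 2 / 2) :=
        mul_le_mul_of_nonneg_left (Phi_le_exp u hu) (Real.rpow_nonneg hu q)
    _ ≤ _ := rpow_mul_exp_bound q hq u hu

lemma abs_rpow_le_one_add_pow (q : ℝ) (hq : 0 ≤ q) (x : ℝ) :
    |x| ^ q ≤ 1 + x ^ (2 * Nat.ceil q) := by
  have hxn : (0 : ℝ) ≤ x ^ (2 * Nat.ceil q) := Even.pow_nonneg (even_two_mul _) x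
  rcases le_or_gt |x| 1 with h1 | h1
  · have := Real.rpow_le_one (abs_nonneg x) h1 hq
    linarith
  · have h2 : |x| ^ q ≤ |x| ^ ((2 * Nat.ceil q : ℕ) : ℝ) := by
      apply Real.rpow_le_rpow_of_exponent_le h1.le
      push_cast
      nlinarith [Nat.le_ceil q, (Nat.ceil q).cast_nonneg (α := ℝ)]
    rw [Real.rpow_natCast] at h2
    have h3 : |x| ^ (2 * Nat.ceil q) = x ^ (2 * Nat.ceil q) := by
      rw [← abs_pow, abs_of_nonneg hxn]
    rw [h3] at h2
    linarith

lemma moment_integrable (q : ℝ) (hq : 0 ≤ q) : Integrable fun g : ℝ => |g| ^ q * stdG g := by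
  set n := Nat.ceil q with hn
  have h1 : Integrable (fun x : ℝ => x ^ (2 * n : ℕ) * Real.exp (-(1/2) * x ^ 2)) := by
    have := integrable_rpow_mul_exp_neg_mul_sq (b := 1/2) (by norm_num)
      (s := ((2 * n : ℕ) : ℝ)) (lt_of_lt_of_le neg_one_lt_zero (Nat.cast_nonneg _))
    simpa only [Real.rpow_natCast] using this
  have h2 : Integrable (fun x : ℝ => x ^ (2 * n : ℕ) * stdG x) := by
    have : (fun x : ℝ => x ^ (2 * n : ℕ) * stdG x) =
        fun x : ℝ => (Real.sqrt (2 * Real.pi))⁻¹ * (x ^ (2 * n : ℕ) * Real.exp (-(1/2) * x ^ 2)) := by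
      funext x; unfold stdG; ring_nf
    rw [this]
    exact h1.const_mul _
  have hbound : Integrable (fun x : ℝ => (1 + x ^ (2 * n : ℕ)) * stdG x) := by
    have : (fun x : ℝ => (1 + x ^ (2 * n : ℕ)) * stdG x) =
        fun x : ℝ => stdG x + x ^ (2 * n : ℕ) * stdG x := by funext x; ring
    rw [this]
    exact stdG_integrable.add h2
  apply Integrable.mono' hbound
  · exact ((continuous_abs.rpow_const fun x => Or.inr hq).mul stdG_continuous).aestronglyMeasurable
  · refine Filter.Eventually.of_forall fun x => ?_
    rw [Real.norm_eq_abs, abs_of_nonneg (mul_nonneg (Real.rpow_nonneg (abs_nonneg x) q) (stdG_nonneg x))]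
    exact mul_le_mul_of_nonneg_right (abs_rpow_le_one_add_pow q hq x) (stdG_nonneg x)

lemma pbar_eq (σ γ t g : ℝ) (hσ : 0 < σ) (hγ : 0 < γ) :
    pbar σ γ t g = min 1 (Real.exp (2 * (t / (2 * (σ * Real.sqrt γ))) *
      (g - t / (2 * (σ * Real.sqrt γ))))) := by
  have hs : 0 < σ * Real.sqrt γ := mul_pos hσ (Real.sqrt_pos.2 hγ)
  have hsq : Real.sqrt γ ^ 2 = γ := Real.sq_sqrt hγ.le
  have hv : 0 < σ ^ 2 * γ := by positivity
  have hK : (0 : ℝ) < (Real.sqrt (2 * Real.pi * (σ ^ 2 * γ)))⁻¹ := by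
    have : (0:ℝ) < 2 * Real.pi * (σ ^ 2 * γ) := by positivity
    exact inv_pos.2 (Real.sqrt_pos.2 this)
  unfold pbar gpdf
  congr 1
  rw [mul_div_mul_left _ _ (ne_of_gt hK), ← Real.exp_sub]
  congr 1
  have hsne : σ * Real.sqrt γ ≠ 0 := ne_of_gt hs
  have hv2 : σ ^ 2 * γ = (σ * Real.sqrt γ) ^ 2 := by rw [mul_pow, hsq]
  rw [hv2]
  generalize hsdef : σ * Real.sqrt γ = s at hsne ⊢
  field_simp
  ring

lemma stdG_mul_exp (g u : ℝ) : Real.exp (2 * u * (g - u)) * stdG g = stdG (g - 2 * u) := by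
  unfold stdG
  rw [mul_left_comm]
  congr 1
  rw [← Real.exp_add]
  congr 1
  ring

lemma pbar_nonneg (σ γ t g : ℝ) : 0 ≤ pbar σ γ t g := by
  unfold pbar gpdf
  apply le_min zero_le_one
  positivity

lemma pbar_le_one (σ γ t g : ℝ) : pbar σ γ t g ≤ 1 := min_le_left _ _

/-- Centered `q`-th moment bound for one step of the sticky kernel `Q_γ` started
at `w₀`: the kernel jumps to `0` with probability `p̄(t, g)` and otherwise moves to
`t − 2σ√γ g`, where `t = τ(w₀) + γ c_∞`. -/
theorem sticky_centered_moment_bound (σ γ c q : ℝ) (τ : ℝ → ℝ)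
    (hσ : 0 < σ) (hγ : 0 < γ) (hc : 0 ≤ c) (hq : 1 ≤ q)
    (hτ0 : ∀ w, 0 ≤ w → 0 ≤ τ w) (hτmono : MonotoneOn τ (Set.Ici (0 : ℝ)))
    (hτzero : τ 0 = 0) (w₀ : ℝ) (hw₀ : 0 ≤ w₀) :
    (∫ g : ℝ, pbar σ γ (τ w₀ + γ * c) g * stdG g) *
        |(0 : ℝ) - (τ w₀ + γ * c)| ^ q +
      (∫ g : ℝ,
        |(τ w₀ + γ * c - 2 * σ * Real.sqrt γ * g) - (τ w₀ + γ * c)| ^ q *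
          (1 - pbar σ γ (τ w₀ + γ * c) g) * stdG g)
    ≤ (4 * σ ^ 2 * γ) ^ (q / 2) *
        (gaussMoment q + 2 * sSup ((fun u : ℝ => u ^ q * Phi (-u)) '' Set.Ici 0)) := by
  have hs : 0 < σ * Real.sqrt γ := mul_pos hσ (Real.sqrt_pos.2 hγ)
  set s := σ * Real.sqrt γ with hs_def
  set t := τ w₀ + γ * c with ht_def
  have ht : 0 ≤ t := add_nonneg (hτ0 w₀ hw₀) (mul_nonneg hγ.le hc)
  set u := t / (2 * s) with hu_def
  have hu : 0 ≤ u := div_nonneg ht (by positivity)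
  have htu : t = 2 * s * u := by rw [hu_def]; field_simp
  have hq0 : (0:ℝ) ≤ q := le_trans zero_le_one hq
  have hpb : ∀ g : ℝ, pbar σ γ t g = min 1 (Real.exp (2 * u * (g - u))) := by
    intro g
    rw [pbar_eq σ γ t g hσ hγ, ← hs_def, ← hu_def]
  -- first integral bound
  have hI : (∫ g : ℝ, pbar σ γ t g * stdG g) ≤ 2 * Phi (-u) := by
    have hint1 : Integrable (Set.indicator (Set.Iio u) (fun g : ℝ => stdG (g - 2 * u))) :=
      (stdG_integrable.comp_sub_right (2 * u)).indicator measurableSet_Iio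
    have hint2 : Integrable (Set.indicator (Set.Ici u) stdG) :=
      stdG_integrable.indicator measurableSet_Ici
    have hle : ∀ g : ℝ, pbar σ γ t g * stdG g ≤
        Set.indicator (Set.Iio u) (fun g => stdG (g - 2 * u)) g
          + Set.indicator (Set.Ici u) stdG g := by
      intro g
      rw [hpb g]
      rcases lt_or_ge g u with hg | hg
      · rw [Set.indicator_of_mem (Set.mem_Iio.2 hg),
          Set.indicator_of_notMem (by simpa using not_le.2 hg), add_zero, ← stdG_mul_exp]
        exact mul_le_mul_of_nonneg_right (min_le_right _ _) (stdG_nonneg g)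
      · rw [Set.indicator_of_notMem (by simpa using hg),
          Set.indicator_of_mem (Set.mem_Ici.2 hg), zero_add]
        calc min 1 (Real.exp (2 * u * (g - u))) * stdG g ≤ 1 * stdG g :=
              mul_le_mul_of_nonneg_right (min_le_left _ _) (stdG_nonneg g)
          _ = stdG g := one_mul _
    calc (∫ g : ℝ, pbar σ γ t g * stdG g)
        ≤ ∫ g : ℝ, (Set.indicator (Set.Iio u) (fun g => stdG (g - 2 * u)) g
            + Set.indicator (Set.Ici u) stdG g) := by
          apply integral_mono_of_nonneg
          · exact Filter.Eventually.of_forall fun g =>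
              mul_nonneg (pbar_nonneg _ _ _ _) (stdG_nonneg g)
          · exact hint1.add hint2
          · exact Filter.Eventually.of_forall hle
      _ = (∫ g in Set.Iio u, stdG (g - 2 * u)) + ∫ g in Set.Ici u, stdG g := by
          rw [integral_add hint1 hint2, integral_indicator measurableSet_Iio,
            integral_indicator measurableSet_Ici]
      _ = Phi (-u) + Phi (-u) := by
          rw [setIntegral_stdG_Ici]
          congr 1
          rw [show (∫ g in Set.Iio u, stdG (g - 2 * u))
              = ∫ g in Set.Iio u, stdG (g + (-(2*u))) from by
            apply setIntegral_congr_fun measurableSet_Iio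
            intro g _; norm_num [sub_eq_add_neg]]
          rw [setIntegral_stdG_shift]
          unfold Phi
          have huu : u + -(2 * u) = -u := by ring
          rw [huu]
      _ = 2 * Phi (-u) := by ring
  -- second integral bound
  have hB : (∫ g : ℝ, |t - 2 * σ * Real.sqrt γ * g - t| ^ q * (1 - pbar σ γ t g) * stdG g)
      ≤ (2 * s) ^ q * gaussMoment q := by
    calc (∫ g : ℝ, |t - 2 * σ * Real.sqrt γ * g - t| ^ q * (1 - pbar σ γ t g) * stdG g)
        ≤ ∫ g : ℝ, (2 * s) ^ q * (|g| ^ q * stdG g) := by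
          apply integral_mono_of_nonneg
          · exact Filter.Eventually.of_forall fun g => mul_nonneg
              (mul_nonneg (Real.rpow_nonneg (abs_nonneg _) q)
                (by linarith [pbar_le_one σ γ t g])) (stdG_nonneg g)
          · exact (moment_integrable q hq0).const_mul _
          · refine Filter.Eventually.of_forall fun g => ?_
            dsimp only
            have habs : |t - 2 * σ * Real.sqrt γ * g - t| = 2 * s * |g| := by
              rw [show t - 2 * σ * Real.sqrt γ * g - t = -(2 * s * g) from by
                rw [hs_def]; ring]
              rw [abs_neg, abs_mul, abs_of_nonneg (by positivity : (0:ℝ) ≤ 2 * s)]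
            rw [habs, Real.mul_rpow (by positivity) (abs_nonneg g)]
            have h1 : (0:ℝ) ≤ (2 * s) ^ q * |g| ^ q :=
              mul_nonneg (Real.rpow_nonneg (by positivity) q) (Real.rpow_nonneg (abs_nonneg g) q)
            calc (2 * s) ^ q * |g| ^ q * (1 - pbar σ γ t g) * stdG g
                ≤ (2 * s) ^ q * |g| ^ q * 1 * stdG g := by
                  apply mul_le_mul_of_nonneg_right _ (stdG_nonneg g)
                  exact mul_le_mul_of_nonneg_left (by linarith [pbar_nonneg σ γ t g]) h1
              _ = (2 * s) ^ q * (|g| ^ q * stdG g) := by ring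
      _ = (2 * s) ^ q * gaussMoment q := by rw [integral_const_mul]; rfl
  -- sup bound
  have hmem : u ^ q * Phi (-u) ≤ sSup ((fun u : ℝ => u ^ q * Phi (-u)) '' Set.Ici 0) :=
    le_csSup (bddAbove_phi_image q hq0) ⟨u, Set.mem_Ici.2 hu, rfl⟩
  have habs0 : |(0:ℝ) - t| = t := by rw [zero_sub, abs_neg, abs_of_nonneg ht]
  have hA : (∫ g : ℝ, pbar σ γ t g * stdG g) * |(0:ℝ) - t| ^ q
      ≤ (2*s)^q * (2 * sSup ((fun u : ℝ => u ^ q * Phi (-u)) '' Set.Ici 0)) := by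
    rw [habs0]
    calc (∫ g : ℝ, pbar σ γ t g * stdG g) * t ^ q
        ≤ (2 * Phi (-u)) * t ^ q := mul_le_mul_of_nonneg_right hI (Real.rpow_nonneg ht q)
      _ = (2*s)^q * (2 * (u ^ q * Phi (-u))) := by
          rw [htu, Real.mul_rpow (by positivity) hu]; ring
      _ ≤ (2*s)^q * (2 * sSup ((fun u : ℝ => u ^ q * Phi (-u)) '' Set.Ici 0)) := by
          apply mul_le_mul_of_nonneg_left _ (Real.rpow_nonneg (by positivity) q)
          linarith
  have hpow : (4 * σ ^ 2 * γ) ^ (q / 2) = (2 * s) ^ q := by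
    have h1 : 4 * σ ^ 2 * γ = (2 * s) ^ 2 := by
      rw [hs_def, mul_pow, mul_pow, Real.sq_sqrt hγ.le]; ring
    rw [h1, ← Real.rpow_natCast (2*s) 2, ← Real.rpow_mul (by positivity : (0:ℝ) ≤ 2*s)]
    congr 1
    push_cast
    ring
  rw [hpow]
  calc (∫ g : ℝ, pbar σ γ t g * stdG g) * |(0:ℝ) - t| ^ q
        + (∫ g : ℝ, |t - 2 * σ * Real.sqrt γ * g - t| ^ q * (1 - pbar σ γ t g) * stdG g)
      ≤ (2*s)^q * (2 * sSup ((fun u : ℝ => u ^ q * Phi (-u)) '' Set.Ici 0))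
        + (2 * s) ^ q * gaussMoment q := add_le_add hA hB
    _ = (2 * s) ^ q * (gaussMoment q
        + 2 * sSup ((fun u : ℝ => u ^ q * Phi (-u)) '' Set.Ici 0)) := by ring
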